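/- If for all x, p(x)ρ_x ≤ 2^{-h} ρ (operator inequality, ρ = Σ_x p(x)ρ_x), and x_i, x_j are two positions of a stationary expander walk with |i−j| ≤ log|X|/log(1/λ), then E_{x_i,x_j}[p(x_i)p(x_j) Tr[ρ_{x_i} ρ^{-1/2} ρ_{x_j} ρ^{-1/2}]] ≤ 2^{-h}/|X|, using that each vertex of a stationary walk is uniformly distributed and p is subnormalized. -/

import Mathlib

open scoped BigOperators ComplexOrder
open Matrix (conjTranspose)

/-- Apply a real function to a Hermitian matrix via its spectral decomposition
(zero if the matrix is not Hermitian). -/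
noncomputable def matFun {n : Type*} [Fintype n] [DecidableEq n]
    (A : Matrix n n ℂ) (f : ℝ → ℝ) : Matrix n n ℂ :=
  if h : A.IsHermitian then h.cfc f else 0

/-- Moore–Penrose pseudoinverse power of a Hermitian matrix: eigenvalue `0` is sent to `0`,
nonzero eigenvalues `t` to `t ^ r`. -/
noncomputable def pinvPow {n : Type*} [Fintype n] [DecidableEq n]
    (A : Matrix n n ℂ) (r : ℝ) : Matrix n n ℂ :=
  matFun A (fun t => if t = 0 then 0 else Real.rpow t r)

/-- Matrix logarithm (base 2) on the support of a Hermitian matrix. -/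
noncomputable def matLog2 {n : Type*} [Fintype n] [DecidableEq n]
    (A : Matrix n n ℂ) : Matrix n n ℂ :=
  matFun A (fun t => if t = 0 then 0 else Real.logb 2 t)

/-- Schatten 1-norm (trace norm) of a complex matrix: the trace of `√(Aᴴ A)`. -/
noncomputable def traceNorm {n : Type*} [Fintype n] [DecidableEq n]
    (A : Matrix n n ℂ) : ℝ :=
  (((Matrix.posSemidef_conjTranspose_mul_self A).1.eigenvectorUnitary.1 *
      Matrix.diagonal ((fun t : ℝ => (t : ℂ)) ∘ (Real.sqrt ·) ∘ (Matrix.posSemidef_conjTranspose_mul_self A).1.eigenvalues) *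
      (star (Matrix.posSemidef_conjTranspose_mul_self A).1.eigenvectorUnitary : Matrix n n ℂ)).trace).re

/-- Schatten 2-norm (Frobenius norm) of a complex matrix. -/
noncomputable def frobNorm {n : Type*} [Fintype n] [DecidableEq n]
    (A : Matrix n n ℂ) : ℝ :=
  Real.sqrt (((A.conjTranspose * A).trace).re)

/-- Squared Frobenius norm. -/
noncomputable def frobSq {n : Type*} [Fintype n] [DecidableEq n]
    (A : Matrix n n ℂ) : ℝ :=
  ((A.conjTranspose * A).trace).re

/-- Schatten ∞-norm (operator norm): square root of the largest eigenvalue of `Aᴴ A`. -/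
noncomputable def matOpNorm {n : Type*} [Fintype n] [DecidableEq n]
    (A : Matrix n n ℂ) : ℝ :=
  Real.sqrt (⨆ i, (Matrix.posSemidef_conjTranspose_mul_self A).1.eigenvalues i)


section helper
lemma psd_trace_re_nonneg {d : ℕ} {A : Matrix (Fin d) (Fin d) ℂ} (hA : A.PosSemidef) :
    0 ≤ A.trace.re := by
  rw [Matrix.trace]
  have hd : ∀ i, 0 ≤ (A i i).re := by
    intro i
    have := hA.re_dotProduct_nonneg (Pi.single i 1)
    simpa [dotProduct, Matrix.mulVec, Pi.single_apply, Finset.sum_ite_eq] using this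
  calc (0:ℝ) ≤ ∑ i, (A i i).re := Finset.sum_nonneg fun i _ => hd i
    _ = _ := by simp [Matrix.diag, Complex.re_sum]

open scoped MatrixOrder in
lemma psd_mul_trace_re_nonneg {d : ℕ} {A B : Matrix (Fin d) (Fin d) ℂ}
    (hA : A.PosSemidef) (hB : B.PosSemidef) : 0 ≤ ((A * B).trace).re := by
  have h1 : A = CFC.sqrt A * CFC.sqrt A := by rw [← pow_two]; exact (CFC.sq_sqrt A hA.nonneg).symm
  have hs := Matrix.nonneg_iff_posSemidef.mp (CFC.sqrt_nonneg A)
  have e : (A * B).trace = (CFC.sqrt A * B * CFC.sqrt A).trace := by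
    conv_lhs => rw [h1]
    rw [mul_assoc, Matrix.trace_mul_comm]
  rw [e]
  have hpsd : (CFC.sqrt A * B * CFC.sqrt A).PosSemidef := by
    have := hB.mul_mul_conjTranspose_same (CFC.sqrt A)
    rwa [hs.isHermitian.eq] at this
  exact psd_trace_re_nonneg hpsd

lemma psd_add {d : ℕ} {A B : Matrix (Fin d) (Fin d) ℂ} (hA : A.PosSemidef)
    (hB : B.PosSemidef) : (A + B).PosSemidef := by
  exact hA.add hB

lemma psd_smul {d : ℕ} {A : Matrix (Fin d) (Fin d) ℂ} (hA : A.PosSemidef) {r : ℝ}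
    (hr : 0 ≤ r) : (r • A).PosSemidef := by
  exact hA.smul hr

lemma psd_sum_smul {X : Type*} [Fintype X] {d : ℕ} (p : X → ℝ) (hp0 : ∀ x, 0 ≤ p x)
    (ρv : X → Matrix (Fin d) (Fin d) ℂ) (hv : ∀ x, (ρv x).PosSemidef) :
    (∑ x, p x • ρv x).PosSemidef := by
  refine Finset.sum_induction _ _ (fun A B hA hB => psd_add hA hB)
    Matrix.PosSemidef.zero (fun x _ => psd_smul (hv x) (hp0 x))
end helper


lemma sigma_facts {d : ℕ} {ρ : Matrix (Fin d) (Fin d) ℂ} (hρ : ρ.PosSemidef) :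
    ∃ σ : Matrix (Fin d) (Fin d) ℂ, σ = pinvPow ρ (-(1/2 : ℝ)) ∧ σ.IsHermitian ∧
      (σ * ρ * σ).PosSemidef ∧ (1 - σ * ρ * σ).PosSemidef := by
  classical
  set hH := hρ.isHermitian with hHdef
  set U : Matrix (Fin d) (Fin d) ℂ := (Matrix.IsHermitian.eigenvectorUnitary hH : Matrix (Fin d) (Fin d) ℂ) with hU
  set ε : Fin d → ℝ := hH.eigenvalues with hε
  set F : ℝ → ℝ := fun t => if t = 0 then 0 else Real.rpow t (-(1/2 : ℝ)) with hF
  have hUU : U * star U = 1 := (Matrix.mem_unitaryGroup_iff).mp (Matrix.IsHermitian.eigenvectorUnitary hH).2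
  have hUU' : star U * U = 1 := (Matrix.mem_unitaryGroup_iff').mp (Matrix.IsHermitian.eigenvectorUnitary hH).2
  set D : Matrix (Fin d) (Fin d) ℂ := Matrix.diagonal (Complex.ofReal ∘ F ∘ ε) with hD
  have hσ : pinvPow ρ (-(1/2 : ℝ)) = U * D * star U := by
    rw [pinvPow, matFun, dif_pos hH, Matrix.IsHermitian.cfc]
    rfl
  have hDH : D.conjTranspose = D := by
    rw [hD, Matrix.diagonal_conjTranspose]
    refine congrArg Matrix.diagonal (funext fun i => ?_)
    simp [Function.comp, Complex.conj_ofReal]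
  have hσH : (U * D * star U).IsHermitian := by
    show (U * D * star U).conjTranspose = U * D * star U
    rw [Matrix.star_eq_conjTranspose, Matrix.conjTranspose_mul, Matrix.conjTranspose_mul,
      Matrix.conjTranspose_conjTranspose, hDH]
    rw [Matrix.mul_assoc]
  set w : Fin d → ℂ := fun i => if ε i = 0 then 0 else 1 with hw
  have hspec : ρ = U * Matrix.diagonal (Complex.ofReal ∘ ε) * star U := hH.spectral_theorem
  have hDED : D * Matrix.diagonal (Complex.ofReal ∘ ε) * D = Matrix.diagonal w := by
    rw [hD, Matrix.diagonal_mul_diagonal, Matrix.diagonal_mul_diagonal]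
    refine congrArg Matrix.diagonal (funext fun i => ?_)
    by_cases h0 : ε i = 0
    · simp [hF, hw, h0]
    · have hpos : 0 < ε i := lt_of_le_of_ne (hρ.eigenvalues_nonneg i) (Ne.symm h0)
      have hr : F (ε i) * ε i * F (ε i) = 1 := by
        rw [hF]
        simp only [if_neg h0]
        have h2 : Real.rpow (ε i) (-(1/2:ℝ)) * Real.rpow (ε i) (-(1/2:ℝ)) = (ε i)⁻¹ := by
          show (ε i) ^ (-(1/2:ℝ)) * (ε i) ^ (-(1/2:ℝ)) = (ε i)⁻¹
          rw [← Real.rpow_add hpos]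
          norm_num
          rw [show (-1 : ℝ) = ((-1 : ℤ) : ℝ) by norm_num, Real.rpow_intCast]
          simp
        calc Real.rpow (ε i) (-(1/2:ℝ)) * ε i * Real.rpow (ε i) (-(1/2:ℝ))
            = (Real.rpow (ε i) (-(1/2:ℝ)) * Real.rpow (ε i) (-(1/2:ℝ))) * ε i := by ring
          _ = (ε i)⁻¹ * ε i := by rw [h2]
          _ = 1 := inv_mul_cancel₀ h0
      show ((F (ε i) : ℂ) * (ε i : ℂ) * (F (ε i) : ℂ)) = w i
      rw [hw]
      simp only [if_neg h0]
      rw [← Complex.ofReal_mul, ← Complex.ofReal_mul, hr, Complex.ofReal_one]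
  have hPi : (U * D * star U) * ρ * (U * D * star U) = U * Matrix.diagonal w * star U := by
    rw [hspec]
    have e : U * D * star U * (U * Matrix.diagonal (Complex.ofReal ∘ ε) * star U) * (U * D * star U)
        = U * (D * Matrix.diagonal (Complex.ofReal ∘ ε) * D) * star U := by
      have cancel : ∀ X : Matrix (Fin d) (Fin d) ℂ, star U * (U * X) = X := fun X => by
        rw [← Matrix.mul_assoc, hUU', Matrix.one_mul]
      simp only [Matrix.mul_assoc, cancel]
    rw [e, hDED]
  refine ⟨U * D * star U, hσ.symm, hσH, ?_, ?_⟩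
  · rw [hPi]
    have hwpos : Matrix.PosSemidef (Matrix.diagonal w) := by
      refine Matrix.posSemidef_diagonal_iff.mpr fun i => ?_
      by_cases h0 : ε i = 0 <;> simp [hw, h0]
    have := hwpos.mul_mul_conjTranspose_same U
    rwa [← Matrix.star_eq_conjTranspose] at this
  · rw [hPi]
    have h1 : (1 : Matrix (Fin d) (Fin d) ℂ) = U * Matrix.diagonal (fun _ => (1:ℂ)) * star U := by
      simp only [Matrix.diagonal_one, Matrix.mul_one, hUU]
    rw [h1]
    have e : U * Matrix.diagonal (fun _ => (1:ℂ)) * star U - U * Matrix.diagonal w * star U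
        = U * Matrix.diagonal (fun i => 1 - w i) * star U := by
      rw [← Matrix.sub_mul, ← Matrix.mul_sub, Matrix.diagonal_sub]
    rw [e]
    have hwpos : Matrix.PosSemidef (Matrix.diagonal (fun i => 1 - w i)) := by
      refine Matrix.posSemidef_diagonal_iff.mpr fun i => ?_
      by_cases h0 : ε i = 0 <;> simp [hw, h0]
    have := hwpos.mul_mul_conjTranspose_same U
    rwa [← Matrix.star_eq_conjTranspose] at this

/-- Cross-term bound for nearby positions of a stationary expander walk: if
`p(x) ρₓ ≤ 2^{-h} ρ` for all `x`, `p` is subnormalized, and the pair `(x_i, x_j)` has uniform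
first marginal, then `E[p(x_i) p(x_j) Tr[ρ_{x_i} ρ^{-1/2} ρ_{x_j} ρ^{-1/2}]] ≤ 2^{-h}/|X|`. -/
theorem stmt10 {X : Type*} [Fintype X] [Nonempty X] {d : ℕ}
    (p : X → ℝ) (hp0 : ∀ x, 0 ≤ p x) (hp1 : ∑ x, p x ≤ 1)
    (ρv : X → Matrix (Fin d) (Fin d) ℂ)
    (hρv : ∀ x, (ρv x).PosSemidef ∧ (ρv x).trace = 1)
    (ρ : Matrix (Fin d) (Fin d) ℂ) (hρ : ρ = ∑ x, (p x : ℝ) • ρv x)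
    (h : ℝ) (hop : ∀ x, ((2 : ℝ) ^ (-h) • ρ - (p x : ℝ) • ρv x).PosSemidef)
    (μ : X × X → ℝ) (hμ0 : ∀ z, 0 ≤ μ z) (hμ1 : ∑ z, μ z = 1)
    (hmarg : ∀ x, ∑ y, μ (x, y) = 1 / (Fintype.card X : ℝ)) :
    ∑ z : X × X, μ z * (p z.1 * p z.2 *
        ((ρv z.1 * pinvPow ρ (-(1/2 : ℝ)) * ρv z.2 * pinvPow ρ (-(1/2 : ℝ))).trace).re)
      ≤ (2 : ℝ) ^ (-h) / (Fintype.card X : ℝ) := by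
  classical
  have hρpsd : ρ.PosSemidef := by
    rw [hρ]; exact psd_sum_smul p hp0 ρv (fun x => (hρv x).1)
  obtain ⟨σ, hσe, hσH, hPipsd, hPile⟩ := sigma_facts hρpsd
  simp only [← hσe]
  set c : ℝ := (2:ℝ)^(-h) with hc
  have hc0 : 0 ≤ c := le_of_lt (Real.rpow_pos_of_pos two_pos _)
  have key : ∀ z : X × X, p z.1 * p z.2 *
      ((ρv z.1 * σ * ρv z.2 * σ).trace).re ≤ p z.1 * c := by
    intro z
    set A := σ * ρv z.1 * σ with hA
    have hApsd : A.PosSemidef := by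
      have := (hρv z.1).1.conjTranspose_mul_mul_same σ
      rwa [hσH.eq] at this
    have hT : ((ρv z.1 * σ * ρv z.2 * σ).trace) = ((A * ρv z.2).trace) := by
      calc (ρv z.1 * σ * ρv z.2 * σ).trace
          = (σ * (ρv z.1 * σ * ρv z.2)).trace := (Matrix.trace_mul_comm _ _)
        _ = (A * ρv z.2).trace := by rw [hA]; simp only [Matrix.mul_assoc]
    have hstep1 : p z.2 * ((A * ρv z.2).trace).re ≤ c * ((A * ρ).trace).re := by
      have h0 := psd_mul_trace_re_nonneg hApsd (hop z.2)
      have he : (A * (c • ρ - p z.2 • ρv z.2)) = c • (A * ρ) - p z.2 • (A * ρv z.2) := by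
        rw [Matrix.mul_sub, mul_smul_comm, mul_smul_comm]
      rw [he, Matrix.trace_sub, Matrix.trace_smul, Matrix.trace_smul, Complex.sub_re] at h0
      simp only [Complex.real_smul, Complex.mul_re, Complex.ofReal_re, Complex.ofReal_im,
        zero_mul, sub_zero] at h0
      linarith
    have hstep2 : ((A * ρ).trace) = ((ρv z.1 * (σ * ρ * σ)).trace) := by
      have e : A * ρ = σ * (ρv z.1 * σ * ρ) := by rw [hA]; simp only [Matrix.mul_assoc]
      rw [e, Matrix.trace_mul_comm]
      simp only [Matrix.mul_assoc]
    have hstep3 : ((ρv z.1 * (σ * ρ * σ)).trace).re ≤ 1 := by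
      have h0 := psd_mul_trace_re_nonneg (hρv z.1).1 hPile
      have he : ρv z.1 * (1 - σ * ρ * σ) = ρv z.1 - ρv z.1 * (σ * ρ * σ) := by
        rw [Matrix.mul_sub, Matrix.mul_one]
      rw [he, Matrix.trace_sub, Complex.sub_re] at h0
      have ht : (ρv z.1).trace.re = 1 := by rw [(hρv z.1).2]; simp
      linarith
    have h2 : p z.2 * ((A * ρv z.2).trace).re ≤ c := by
      calc p z.2 * ((A * ρv z.2).trace).re ≤ c * ((A * ρ).trace).re := hstep1
        _ = c * ((ρv z.1 * (σ * ρ * σ)).trace).re := by rw [hstep2]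
        _ ≤ c * 1 := mul_le_mul_of_nonneg_left hstep3 hc0
        _ = c := mul_one c
    rw [hT]
    calc p z.1 * p z.2 * ((A * ρv z.2).trace).re
        = p z.1 * (p z.2 * ((A * ρv z.2).trace).re) := by ring
      _ ≤ p z.1 * c := mul_le_mul_of_nonneg_left h2 (hp0 z.1)
  have hcard : (0:ℝ) < (Fintype.card X : ℝ) := by
    exact_mod_cast Fintype.card_pos
  calc ∑ z : X × X, μ z * (p z.1 * p z.2 * ((ρv z.1 * σ * ρv z.2 * σ).trace).re)
      ≤ ∑ z : X × X, μ z * (p z.1 * c) :=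
        Finset.sum_le_sum fun z _ => mul_le_mul_of_nonneg_left (key z) (hμ0 z)
    _ = (∑ x, p x) * (c / (Fintype.card X : ℝ)) := by
        rw [Fintype.sum_prod_type]
        have e : ∀ x, ∑ y, μ (x,y) * (p x * c) = p x * (c / (Fintype.card X:ℝ)) := by
          intro x
          rw [← Finset.sum_mul, hmarg x]
          ring
        rw [Finset.sum_congr rfl (fun x _ => e x), ← Finset.sum_mul]
    _ ≤ 1 * (c / (Fintype.card X : ℝ)) := by
        refine mul_le_mul_of_nonneg_right hp1 ?_
        positivity
    _ = c / (Fintype.card X : ℝ) := one_mul _
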